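/- A sequence y ∈ Y cannot simultaneously contain an elementary block belonging to {ABA, DCD} and an elementary block belonging to {BAB, CDC}. -/

import Mathlib

open MeasureTheory Filter Topology
open scoped ENNReal

attribute [local instance] Classical.propDecidable

noncomputable section

/-- The shift map on bi-infinite sequences: `(S x) n = x (n+1)`. -/
def shift {α : Type*} (x : ℤ → α) : ℤ → α := fun n => x (n + 1)

/-- Shift by an arbitrary integer amount `m`. -/
def shiftZ {α : Type*} (m : ℤ) (x : ℤ → α) : ℤ → α := fun n => x (n + m)

/-- A run structure on a bi-infinite sequence `x`: `t k` is the starting index of the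
`k`-th maximal mono-symbol block of `x`, indexed so that block `0` contains position `0`. -/
structure RunStructure (x : ℤ → ℕ) where
  t : ℤ → ℤ
  mono : StrictMono t
  start_nonpos : t 0 ≤ 0
  start_pos : 0 < t 1
  const : ∀ k i : ℤ, t k ≤ i → i < t (k + 1) → x i = x (t k)
  alt : ∀ k : ℤ, x (t (k + 1)) ≠ x (t k)

/-- `d` is the run-length derivative of `x`: `d k` is the length of the `k`-th run. -/
def IsDelta (x d : ℤ → ℕ) : Prop :=
  ∃ r : RunStructure x, ∀ k : ℤ, (d k : ℤ) = r.t (k + 1) - r.t k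

/-- The run-length derivative operator `Δ` (junk value when no derivative exists). -/
def delta (x : ℤ → ℕ) : ℤ → ℕ :=
  if h : ∃ d, IsDelta x d then h.choose else fun _ => 0

/-- A bi-infinite sequence is smooth over `{1,3}` if all its iterated derivatives exist
and take values in `{1,3}`. -/
def SmoothSeq (x : ℤ → ℕ) : Prop :=
  ∀ k : ℕ, ∀ n : ℤ, delta^[k] x n = 1 ∨ delta^[k] x n = 3

/-- The set `X` of bi-infinite smooth sequences over `{1,3}`. -/
def SmoothX : Set (ℤ → ℕ) := {x | SmoothSeq x}

/-- The recoding alphabet: `A = 1`, `B = 3`, `C = 111`, `D = 333`. -/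
inductive ABCD : Type
  | A | B | C | D
deriving DecidableEq

instance : TopologicalSpace ABCD := ⊥
instance : DiscreteTopology ABCD := ⟨rfl⟩
instance : MeasurableSpace ABCD := ⊤

open ABCD

/-- The symbol (1 or 3) of the run encoded by a letter. -/
def sval : ABCD → ℕ
  | A => 1
  | B => 3
  | C => 1
  | D => 3

/-- The length (1 or 3) of the run encoded by a letter; this is also the value of `Δx`
at the corresponding position. -/
def lval : ABCD → ℕ
  | A => 1
  | B => 1
  | C => 3
  | D => 3

/-- `y` is the recoding of `x`: the letter `y k` encodes the `k`-th run of `x`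
(its symbol and its length). -/
def IsRecoding (x : ℤ → ℕ) (y : ℤ → ABCD) : Prop :=
  ∃ r : RunStructure x, ∀ k : ℤ,
    x (r.t k) = sval (y k) ∧ r.t (k + 1) - r.t k = (lval (y k) : ℤ)

/-- The recoding map `rec` (junk value when no recoding exists). -/
def recode (x : ℤ → ℕ) : ℤ → ABCD :=
  if h : ∃ y, IsRecoding x y then h.choose else fun _ => A

/-- The set `Y = rec(X)` of recodings of smooth sequences. -/
def SmoothY : Set (ℤ → ABCD) := recode '' SmoothX

/-- The derivative operator induced on recodings: since `(Δx) i = lval (rec x i)`,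
we have `Δ(rec x) = rec (Δ x) = recode (lval ∘ rec x)`. -/
def deltaY (y : ℤ → ABCD) : ℤ → ABCD := recode fun i => (lval (y i) : ℕ)

/-- `y` is well-aligned: the elementary block of `y` containing coordinate `0` starts
at position `0` (elementary blocks of `y` are exactly the runs of `Δx`, and
`(Δx) i = lval (y i)`). -/
def WellAligned (y : ℤ → ABCD) : Prop := lval (y (-1)) ≠ lval (y 0)

/-- `B_Y^L`: the set of `y ∈ Y` such that `y, Δy, ..., Δ^{L-1} y` are all well-aligned. -/
def BY (L : ℕ) : Set (ℤ → ABCD) :=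
  {y | y ∈ SmoothY ∧ ∀ l < L, WellAligned (deltaY^[l] y)}

/-- `Σ_y^L(n) = #{k ∈ [1,n] : S^k y ∈ B_Y^L}`. -/
def SigY (L : ℕ) (y : ℤ → ABCD) (n : ℕ) : ℕ :=
  ((Finset.Icc 1 n).filter fun k => shift^[k] y ∈ BY L).card

/-- `y` contains an elementary block in `{ABA, DCD}` (for `y ∈ Y`, any such factor is
automatically an elementary block). -/
def HasType0 (y : ℤ → ABCD) : Prop :=
  ∃ i : ℤ, (y i = A ∧ y (i + 1) = B ∧ y (i + 2) = A) ∨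
           (y i = D ∧ y (i + 1) = C ∧ y (i + 2) = D)

/-- `y` contains an elementary block in `{BAB, CDC}`. -/
def HasType1 (y : ℤ → ABCD) : Prop :=
  ∃ i : ℤ, (y i = B ∧ y (i + 1) = A ∧ y (i + 2) = B) ∨
           (y i = C ∧ y (i + 1) = D ∧ y (i + 2) = C)

/-- The type of a recoded sequence: `false` = type 0, `true` = type 1. -/
def typeOf (y : ℤ → ABCD) : Bool := decide (HasType1 y)

/-- The sequence of types of the successive derivatives of a smooth sequence `x`. -/
def TypesX (x : ℤ → ℕ) : ℕ → Bool := fun n => typeOf (recode (delta^[n] x))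

/-- The sequence of types of the successive derivatives of a recoded sequence `y`. -/
def TypesY (y : ℤ → ABCD) : ℕ → Bool := fun n => typeOf (deltaY^[n] y)

/-- `X_τ`: smooth bi-infinite sequences whose type sequence is exactly `τ`. -/
def Xset (τ : ℕ → Bool) : Set (ℤ → ℕ) := {x ∈ SmoothX | TypesX x = τ}

/-- `Y_τ = rec(X_τ)`. -/
def Yset (τ : ℕ → Bool) : Set (ℤ → ABCD) := recode '' Xset τ

/-- A sequence over `{A,B,C,D}` is alternating: no two consecutive symbols in `{A,C}`
and no two consecutive symbols in `{B,D}`. -/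
def Alternating (y : ℤ → ABCD) : Prop := ∀ n : ℤ, sval (y n) ≠ sval (y (n + 1))

/-- The substitutions `φ₀` and `φ₁` on letters. -/
def phiW : Bool → ABCD → List ABCD
  | false, A => [A]
  | false, B => [D]
  | false, C => [A, B, A]
  | false, D => [D, C, D]
  | true, A => [B]
  | true, B => [C]
  | true, C => [B, A, B]
  | true, D => [C, D, C]

/-- `z` is the image of the bi-infinite sequence `y` under the substitution `φ_t`, with
the convention that the image of the letter at position `0` starts at position `0`. -/
def IsSubst (t : Bool) (y z : ℤ → ABCD) : Prop :=
  ∃ u : ℤ → ℤ, u 0 = 0 ∧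
    (∀ k : ℤ, u (k + 1) = u k + (phiW t (y k)).length) ∧
    (∀ k : ℤ, ∀ j : Fin (phiW t (y k)).length, z (u k + (j : ℕ)) = (phiW t (y k)).get j)

/-- The substitution `φ_t` on bi-infinite sequences. -/
def substF (t : Bool) (y : ℤ → ABCD) : ℤ → ABCD :=
  if h : ∃ z, IsSubst t y z then h.choose else y

/-- The composition `φ_{τ₀} ∘ φ_{τ₁} ∘ ⋯ ∘ φ_{τ_{L-1}}`. -/
def substComp (τ : ℕ → Bool) : ℕ → (ℤ → ABCD) → (ℤ → ABCD)
  | 0 => id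
  | L + 1 => substF (τ 0) ∘ substComp (fun n => τ (n + 1)) L

/-- The homographies `h₀` and `h₁`. -/
def hmap : Bool → ℝ × ℝ → ℝ × ℝ
  | false, p => ((1 - p.1) / (3 - 2 * (p.1 + p.2)), (1 / 2 - p.1) / (3 - 2 * (p.1 + p.2)))
  | true, p => ((1 / 2 - p.1) / (3 - 2 * (p.1 + p.2)), (1 - p.1) / (3 - 2 * (p.1 + p.2)))

/-- The square `K = [0,1/2] × [0,1/2]`. -/
def Ksq : Set (ℝ × ℝ) := Set.Icc (0 : ℝ) (1 / 2) ×ˢ Set.Icc (0 : ℝ) (1 / 2)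

/-- The domain `E = {(a,b) ∈ K : a + b ≤ 3/4}`. -/
def Eset : Set (ℝ × ℝ) := {p ∈ Ksq | p.1 + p.2 ≤ 3 / 4}

/-- The composition `h_{t₀} ∘ h_{t₁} ∘ ⋯ ∘ h_{t_L}`. -/
def hComp (t : ℕ → Bool) : ℕ → (ℝ × ℝ → ℝ × ℝ)
  | 0 => hmap (t 0)
  | L + 1 => hComp t L ∘ hmap (t (L + 1))

/-- The point `(a(t), b(t))`, unique point of `⋂_L (h_{t₀} ∘ ⋯ ∘ h_{t_L})(E)`. -/
def abPoint (t : ℕ → Bool) : ℝ × ℝ :=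
  if h : ∃ p : ℝ × ℝ, (⋂ L : ℕ, hComp t L '' Eset) = {p} then h.choose else 0

/-- The number of occurrences of the letter `s` among positions `1, ..., m` of `z`. -/
def letterCount (s : ABCD) (z : ℤ → ABCD) (m : ℕ) : ℕ :=
  ((Finset.Icc 1 m).filter fun k => z (k : ℤ) = s).card

/-- `w` occurs as a factor of `y` at position `i`. -/
def IsFactorAt (w : List ABCD) (y : ℤ → ABCD) (i : ℤ) : Prop :=
  ∀ j : Fin w.length, y (i + (j : ℕ)) = w.get j

/-- The cylinder set `[w]` in `{1,3}^ℤ`. -/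
def cylX (w : List ℕ) : Set (ℤ → ℕ) :=
  {x | ∀ j : Fin w.length, x ((j : ℕ) : ℤ) = w.get j}

/-- The cylinder set `[w]` in `{A,B,C,D}^ℤ`. -/
def cylY (w : List ABCD) : Set (ℤ → ABCD) :=
  {y | ∀ j : Fin w.length, y ((j : ℕ) : ℤ) = w.get j}

/-- The number of occurrences of the finite word `w` in the prefix `x₀ ⋯ x_{n-1}`. -/
def occCount (x : ℤ → ℕ) (w : List ℕ) (n : ℕ) : ℕ :=
  ((Finset.range n).filter fun i =>
    i + w.length ≤ n ∧ ∀ j : Fin w.length, x (((i + (j : ℕ) : ℕ)) : ℤ) = w.get j).card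

/-- A subshift `Z` is minimal if it contains no nonempty proper closed shift-invariant
subset. -/
def ShiftMinimal {α : Type*} [TopologicalSpace α] (Z : Set (ℤ → α)) : Prop :=
  ∀ W : Set (ℤ → α), W ⊆ Z → W.Nonempty → IsClosed W → shift '' W = W → W = Z

section Stmt4Aux

variable {x : ℤ → ℕ}

lemma t_add_le (r : RunStructure x) (a : ℤ) : ∀ n : ℕ, r.t a + n ≤ r.t (a + n) := by
  intro n
  induction n with
  | zero => simp
  | succ n ih =>
    have h : r.t (a + n) < r.t (a + n + 1) := r.mono (by omega)
    have : (a : ℤ) + (n + 1 : ℕ) = a + n + 1 := by push_cast; ring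
    rw [this]
    push_cast at ih ⊢
    omega

lemma exists_run (r : RunStructure x) (i : ℤ) : ∃ k, r.t k ≤ i ∧ i < r.t (k + 1) := by
  have hbdd : ∃ b : ℤ, ∀ z : ℤ, r.t z ≤ i → z ≤ b := by
    refine ⟨(i - r.t 0).toNat, fun z hz => ?_⟩
    by_contra h
    push_neg at h
    have hz0 : (0 : ℤ) ≤ z := by omega
    have := t_add_le r 0 z.toNat
    rw [Int.toNat_of_nonneg hz0] at this
    simp only [zero_add] at this
    omega
  have hinh : ∃ z : ℤ, r.t z ≤ i := by
    refine ⟨0 - (r.t 0 - i).toNat, ?_⟩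
    have := t_add_le r (0 - (r.t 0 - i).toNat) (r.t 0 - i).toNat
    have h2 : (0 - (r.t 0 - i).toNat : ℤ) + (r.t 0 - i).toNat = 0 := by ring
    rw [h2] at this
    omega
  obtain ⟨k, hk, hmax⟩ := Int.exists_greatest_of_bdd hbdd hinh
  refine ⟨k, hk, ?_⟩
  by_contra h
  push_neg at h
  have := hmax (k + 1) h
  omega

lemma not_change (r : RunStructure x) {k i : ℤ} (h1 : r.t k < i) (h2 : i < r.t (k + 1)) :
    x i = x (i - 1) := by
  have e1 : x i = x (r.t k) := r.const k i (le_of_lt h1) h2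
  have e2 : x (i - 1) = x (r.t k) := r.const k (i - 1) (by omega) (by omega)
  rw [e1, e2]

lemma change_at (r : RunStructure x) (k : ℤ) : x (r.t k) ≠ x (r.t k - 1) := by
  have hlt : r.t (k - 1) < r.t k := r.mono (by omega)
  have e2 : x (r.t k - 1) = x (r.t (k - 1)) :=
    r.const (k - 1) (r.t k - 1) (by omega) (by rw [sub_add_cancel]; omega)
  have halt := r.alt (k - 1)
  rw [sub_add_cancel] at halt
  rw [e2]
  exact halt

lemma t_zero_eq (r1 r2 : RunStructure x) : r1.t 0 = r2.t 0 := by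
  have key : ∀ (s1 s2 : RunStructure x), ¬ s1.t 0 < s2.t 0 := by
    intro s1 s2 hlt
    have hch := change_at s2 0
    have : x (s2.t 0) = x (s2.t 0 - 1) :=
      not_change s1 (k := 0) hlt (lt_of_le_of_lt s2.start_nonpos s1.start_pos)
    exact hch this
  have h1 := key r1 r2
  have h2 := key r2 r1
  omega

lemma t_succ_eq (r1 r2 : RunStructure x) (k1 k2 : ℤ) (h : r1.t k1 = r2.t k2) :
    r1.t (k1 + 1) = r2.t (k2 + 1) := by
  have key : ∀ (s1 s2 : RunStructure x) (m1 m2 : ℤ), s1.t m1 = s2.t m2 →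
      ¬ s1.t (m1 + 1) < s2.t (m2 + 1) := by
    intro s1 s2 m1 m2 hm hlt
    have hch := change_at s1 (m1 + 1)
    have hgt : s2.t m2 < s1.t (m1 + 1) := by rw [← hm]; exact s1.mono (by omega)
    exact hch (not_change s2 hgt hlt)
  have h1 := key r1 r2 k1 k2 h
  have h2 := key r2 r1 k2 k1 h.symm
  omega

lemma t_pred_eq (r1 r2 : RunStructure x) (k1 k2 : ℤ) (h : r1.t k1 = r2.t k2) :
    r1.t (k1 - 1) = r2.t (k2 - 1) := by
  have key : ∀ (s1 s2 : RunStructure x) (m1 m2 : ℤ), s1.t m1 = s2.t m2 →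
      ¬ s1.t (m1 - 1) < s2.t (m2 - 1) := by
    intro s1 s2 m1 m2 hm hlt
    have hch := change_at s2 (m2 - 1)
    have hup : s2.t (m2 - 1) < s1.t (m1 - 1 + 1) := by
      rw [sub_add_cancel, hm]
      exact s2.mono (by omega)
    exact hch (not_change s1 hlt hup)
  have h1 := key r1 r2 k1 k2 h
  have h2 := key r2 r1 k2 k1 h.symm
  omega

lemma t_eq (r1 r2 : RunStructure x) : ∀ k : ℤ, r1.t k = r2.t k := by
  intro k
  induction k using Int.induction_on with
  | zero => exact t_zero_eq r1 r2
  | succ i ih => exact t_succ_eq r1 r2 i i ih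
  | pred i ih =>
    have h := t_pred_eq r1 r2 (-i) (-i) ih
    have e : (-(i : ℤ) - 1) = -i - 1 := rfl
    convert h using 2

lemma isDelta_unique {d1 d2 : ℤ → ℕ} (h1 : IsDelta x d1) (h2 : IsDelta x d2) : d1 = d2 := by
  obtain ⟨r1, hr1⟩ := h1
  obtain ⟨r2, hr2⟩ := h2
  funext k
  have e1 := hr1 k
  have e2 := hr2 k
  rw [t_eq r1 r2 k, t_eq r1 r2 (k + 1)] at e1
  have : (d1 k : ℤ) = (d2 k : ℤ) := by omega
  exact_mod_cast this

end Stmt4Aux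

/-- Exclusion of the two types.
A sequence `y ∈ Y` cannot simultaneously contain an elementary block in `{ABA, DCD}`
and an elementary block in `{BAB, CDC}`. -/
theorem stmt4 (y : ℤ → ABCD) (hy : y ∈ SmoothY) : ¬ (HasType0 y ∧ HasType1 y) := by
  rintro ⟨h0, h1⟩
  obtain ⟨x, hx, hxy⟩ := hy
  by_cases hr : ∃ y', IsRecoding x y'
  · have hrec : IsRecoding x y := by
      rw [← hxy]; unfold recode; rw [dif_pos hr]; exact hr.choose_spec
    obtain ⟨r, hrspec⟩ := hrec
    have hdel : IsDelta x (fun n => lval (y n)) := ⟨r, fun k => by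
      have h := (hrspec k).2
      show ((lval (y k) : ℕ) : ℤ) = r.t (k + 1) - r.t k
      omega⟩
    have hexD : ∃ d', IsDelta x d' := ⟨_, hdel⟩
    have hdx : delta x = fun n => lval (y n) := by
      apply isDelta_unique _ hdel
      unfold delta; rw [dif_pos hexD]; exact hexD.choose_spec
    have hs2 : ∀ n, delta (fun n => lval (y n)) n = 1 ∨ delta (fun n => lval (y n)) n = 3 := by
      intro n
      have h := hx 2 n
      rw [show (2 : ℕ) = 1 + 1 from rfl, Function.iterate_add_apply, Function.iterate_one,
        hdx] at h
      exact h
    have hexD2 : ∃ d', IsDelta (fun n => lval (y n)) d' := by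
      by_contra hcon
      have hz : delta (fun n => lval (y n)) = fun _ => 0 := by
        unfold delta; rw [dif_neg hcon]
      rcases hs2 0 with h | h <;> rw [hz] at h <;> simp at h
    have hdd : IsDelta (fun n => lval (y n)) (delta (fun n => lval (y n))) := by
      unfold delta; rw [dif_pos hexD2]; exact hexD2.choose_spec
    obtain ⟨r', hr'⟩ := hdd
    have hlen : ∀ k, r'.t (k + 1) - r'.t k = 1 ∨ r'.t (k + 1) - r'.t k = 3 := by
      intro k
      have h := hr' k
      rcases hs2 k with e | e <;> rw [e] at h <;> [left; right] <;> omega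
    have hsval : ∀ n : ℤ, sval (y n) = 1 ∨ sval (y n) = 3 := fun n => by
      cases y n <;> simp [sval]
    have hlval : ∀ n : ℤ, lval (y n) = 1 ∨ lval (y n) = 3 := fun n => by
      cases y n <;> simp [lval]
    have hsalt : ∀ n : ℤ, sval (y (n + 1)) = 4 - sval (y n) := by
      intro n
      have h1 := (hrspec n).1
      have h2 := (hrspec (n + 1)).1
      have h3 := r.alt n
      rw [h1, h2] at h3
      rcases hsval n with e | e <;> rcases hsval (n + 1) with f | f <;> omega
    have hsalt3 : ∀ n : ℤ, sval (y (n + 3)) = 4 - sval (y n) := by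
      intro n
      have a := hsalt n
      have b := hsalt (n + 1)
      have c := hsalt (n + 2)
      rw [show n + 1 + 1 = n + 2 from by ring] at b
      rw [show n + 2 + 1 = n + 3 from by ring] at c
      rcases hsval n with e | e <;> omega
    have hstep : ∀ k : ℤ,
        ((sval (y (r'.t k)) = lval (y (r'.t k))) ↔
         (sval (y (r'.t (k + 1))) = lval (y (r'.t (k + 1))))) := by
      intro k
      have halt : lval (y (r'.t (k + 1))) ≠ lval (y (r'.t k)) := r'.alt k
      have hsk : sval (y (r'.t (k + 1))) = 4 - sval (y (r'.t k)) := by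
        rcases hlen k with h | h
        · have hh := hsalt (r'.t k)
          rwa [show r'.t k + 1 = r'.t (k + 1) from by omega] at hh
        · have hh := hsalt3 (r'.t k)
          rwa [show r'.t k + 3 = r'.t (k + 1) from by omega] at hh
      rcases hsval (r'.t k) with e | e <;> rcases hlval (r'.t k) with g | g <;>
        rcases hlval (r'.t (k + 1)) with g' | g' <;> omega
    have hconst : ∀ k : ℤ,
        ((sval (y (r'.t k)) = lval (y (r'.t k))) ↔
         (sval (y (r'.t 0)) = lval (y (r'.t 0)))) := by
      intro k
      induction k using Int.induction_on with
      | zero => exact Iff.rfl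
      | succ i ih => exact (hstep i).symm.trans ih
      | pred i ih =>
        have h := hstep (-(i : ℤ) - 1)
        rw [show (-(i : ℤ) - 1 + 1) = -(i : ℤ) from by ring] at h
        exact h.trans ih
    have hloc : ∀ i : ℤ, lval (y (i + 1)) = lval (y i) → lval (y (i + 2)) = lval (y i) →
        ∃ k, r'.t k = i := by
      intro i e1 e2
      obtain ⟨k, hk1, hk2⟩ := exists_run r' i
      have e0 : lval (y i) = lval (y (r'.t k)) := r'.const k i hk1 hk2
      have halt : lval (y (r'.t (k + 1))) ≠ lval (y (r'.t k)) := r'.alt k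
      have h3 : r'.t (k + 1) ≠ i + 1 := by
        intro h; apply halt; rw [h]; omega
      have h4 : r'.t (k + 1) ≠ i + 2 := by
        intro h; apply halt; rw [h]; omega
      have h5 := hlen k
      exact ⟨k, by omega⟩
    obtain ⟨i, hi⟩ := h0
    obtain ⟨j, hj⟩ := h1
    obtain ⟨k, hk⟩ : ∃ k, r'.t k = i := by
      rcases hi with ⟨a, b, c⟩ | ⟨a, b, c⟩ <;> exact hloc i (by simp [a, b, lval]) (by simp [a, c, lval])
    obtain ⟨k', hk'⟩ : ∃ k, r'.t k = j := by
      rcases hj with ⟨a, b, c⟩ | ⟨a, b, c⟩ <;> exact hloc j (by simp [a, b, lval]) (by simp [a, c, lval])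
    have A1 : sval (y (r'.t k)) = lval (y (r'.t k)) := by
      rw [hk]; rcases hi with ⟨a, -, -⟩ | ⟨a, -, -⟩ <;> rw [a] <;> rfl
    have A2 : ¬ (sval (y (r'.t k')) = lval (y (r'.t k'))) := by
      rw [hk']; rcases hj with ⟨a, -, -⟩ | ⟨a, -, -⟩ <;> rw [a] <;> decide
    exact A2 ((hconst k').mpr ((hconst k).mp A1))
  · have hyA : y = fun _ => A := by
      rw [← hxy]; unfold recode; rw [dif_neg hr]
    obtain ⟨i, hi⟩ := h1
    rcases hi with ⟨hB, -, -⟩ | ⟨hB, -, -⟩ <;> (rw [hyA] at hB; exact absurd hB (by simp))
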